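/- Let p be a prime, K a field of characteristic p, and κ ∈ K with κ ≠ 0. A polynomial f ∈ K[t] satisfies f(t - κ) = f(t) if and only if f lies in the subring K[t^p - κ^{p-1} t]. -/

import Mathlib

open Polynomial

theorem quasi_constant_iff_mem_adjoin {p : ℕ} [Fact p.Prime] {K : Type*} [Field K] [CharP K p]
    (κ : K) (hκ : κ ≠ 0) (f : K[X]) :
    f.comp (X - C κ) = f ↔
      f ∈ Algebra.adjoin K ({X ^ p - C (κ ^ (p - 1)) * X} : Set K[X]) := by
  have hp : p.Prime := Fact.out
  have hp2 : 2 ≤ p := hp.two_le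
  set g : K[X] := X ^ p - C (κ ^ (p - 1)) * X with hg
  set s : K[X] := X - C κ with hs
  haveI hchar : CharP K[X] p := by
    constructor
    intro n
    rw [← Polynomial.C_eq_natCast, Polynomial.C_eq_zero, CharP.cast_eq_zero_iff K p]
  haveI : ExpChar K[X] p := ExpChar.prime hp
  -- g is invariant under the shift
  have hgcomp : g.comp s = g := by
    have hpow := sub_pow_char (p := p) (X : K[X]) (C κ)
    simp only [hg, hs, sub_comp, pow_comp, X_comp, mul_comp, C_comp]
    rw [hpow]
    have hκp : (C κ : K[X]) ^ p = C (κ ^ (p-1)) * C κ := by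
      rw [← C_pow, ← C_mul, ← pow_succ, Nat.sub_add_cancel (by omega : 1 ≤ p)]
    rw [hκp]
    ring
  have hdCX : (C (κ ^ (p - 1)) * X : K[X]).degree < (p : WithBot ℕ) := by
    calc (C (κ ^ (p - 1)) * X : K[X]).degree ≤ 1 := degree_C_mul_X_le _
      _ < (p : WithBot ℕ) := by exact_mod_cast hp2.trans_lt' one_lt_two
  -- g is monic of degree p
  have hgm : g.Monic := monic_X_pow_sub hdCX
  have hgdeg : g.natDegree = p := by
    have hlt : ((C (κ ^ (p - 1)) * X : K[X])).degree < (X ^ p : K[X]).degree := by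
      rwa [degree_X_pow]
    have hnd : ((C (κ ^ (p - 1)) * X : K[X])).natDegree < (X ^ p : K[X]).natDegree := by
      have h1 : ((C (κ ^ (p - 1)) * X : K[X])).natDegree ≤ 1 :=
        natDegree_mul_le.trans (by simp)
      rw [natDegree_X_pow]
      omega
    rw [hg, natDegree_sub_eq_left_of_natDegree_lt hnd, natDegree_X_pow]
  have hg0 : g ≠ 0 := hgm.ne_zero
  constructor
  · -- forward direction
    intro hf
    -- key fact: a shift-invariant polynomial of natDegree < p is constant
    have hconst : ∀ r : K[X], r.comp s = r → r.natDegree < p → ∃ c, r = C c := by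
      intro r hr hrd
      refine ⟨r.eval 0, ?_⟩
      have heval : ∀ x : K, r.eval (x - κ) = r.eval x := by
        intro x
        conv_rhs => rw [← hr]
        simp [hs, eval_comp]
      have hevaln : ∀ n : ℕ, r.eval (-(n : K) * κ) = r.eval 0 := by
        intro n
        induction n with
        | zero => simp
        | succ n ih =>
          have h1 : (-(↑(n+1) : K) * κ) = (-(n:K) * κ) - κ := by push_cast; ring
          rw [h1, heval, ih]
      have hinj : Function.Injective (fun i : Fin p => -((i : ℕ) : K) * κ) := by
        intro i j hij
        simp only [neg_mul, neg_inj, mul_eq_mul_right_iff, or_iff_left hκ] at hij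
        exact Fin.ext (CharP.natCast_injOn_Iio K p i.isLt j.isLt hij)
      have hzero : r - C (r.eval 0) = 0 := by
        apply eq_zero_of_natDegree_lt_card_of_eval_eq_zero _ hinj
        · intro i
          simp only [eval_sub, eval_C, ← neg_mul, hevaln, sub_self]
        · calc (r - C (r.eval 0)).natDegree ≤ max r.natDegree (C (r.eval 0)).natDegree :=
                natDegree_sub_le _ _
            _ < p := by
                have := natDegree_C (r.eval 0)
                omega
            _ = Fintype.card (Fin p) := (Fintype.card_fin p).symm
      exact sub_eq_zero.mp hzero
    -- strong induction on the degree
    suffices H : ∀ n : ℕ, ∀ F : K[X], F.natDegree ≤ n → F.comp s = F →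
        F ∈ Algebra.adjoin K ({g} : Set K[X]) by
      exact H f.natDegree f le_rfl hf
    intro n
    induction n using Nat.strong_induction_on with
    | _ n ih =>
      intro F hFn hF
      by_cases hFd : F.natDegree < p
      · obtain ⟨c, rfl⟩ := hconst F hF hFd
        exact Subalgebra.algebraMap_mem _ c
      · push_neg at hFd
        set q := F /ₘ g with hq
        set r := F %ₘ g with hr
        have hFeq : r + g * q = F := modByMonic_add_div F g
        have hrdeg : r.degree < g.degree := degree_modByMonic_lt F hgm
        have hrdeg' : r.natDegree < p := by
          rcases eq_or_ne r 0 with h0 | h0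
          · simp [h0]; omega
          · have := natDegree_lt_natDegree h0 hrdeg
            omega
        -- both q and r are shift invariant
        have hkey : g * (q.comp s - q) = r - r.comp s := by
          have h1 : r.comp s + g * q.comp s = r + g * q := by
            calc r.comp s + g * q.comp s = r.comp s + g.comp s * q.comp s := by rw [hgcomp]
              _ = (r + g * q).comp s := by simp [add_comp, mul_comp]
              _ = F.comp s := by rw [hFeq]
              _ = F := hF
              _ = r + g * q := hFeq.symm
          linear_combination h1
        have hqcomp : q.comp s = q := by
          by_contra hne
          have hu : q.comp s - q ≠ 0 := sub_ne_zero.mpr hne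
          have hL : g.degree ≤ (g * (q.comp s - q)).degree := by
            rw [degree_mul]
            exact le_add_of_nonneg_right (by
              simpa using (zero_le_degree_iff).2 hu)
          have hscomp : (r.comp s).degree < g.degree := by
            rcases eq_or_ne r 0 with h0 | h0
            · simp only [h0, zero_comp, degree_zero]
              exact bot_lt_iff_ne_bot.mpr (by simp [degree_eq_bot, hg0])
            · have hs1 : s.natDegree = 1 := by
                rw [hs]; exact natDegree_X_sub_C κ
              have hnd : (r.comp s).natDegree = r.natDegree := by
                rw [natDegree_comp, hs1, mul_one]
              have hc0 : r.comp s ≠ 0 := by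
                intro hc
                apply h0
                have hsx : s.comp (X + C κ) = X := by simp [hs]
                have : (r.comp s).comp (X + C κ) = r := by
                  rw [comp_assoc, hsx, comp_X]
                rw [hc, zero_comp] at this
                exact this.symm
              have hdeq : (r.comp s).degree = r.degree := by
                rw [degree_eq_natDegree hc0, degree_eq_natDegree h0, hnd]
              rw [hdeq]
              exact hrdeg
          have hR : (r - r.comp s).degree < g.degree :=
            lt_of_le_of_lt (degree_sub_le _ _) (max_lt (hrdeg) hscomp)
          rw [hkey] at hL
          exact absurd (hL.trans_lt hR) (lt_irrefl _)
        have hrcomp : r.comp s = r := by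
          have : r - r.comp s = 0 := by rw [← hkey, hqcomp]; ring
          linear_combination -this
        obtain ⟨c, hc⟩ := hconst r hrcomp hrdeg'
        have hqdeg : q.natDegree < n := by
          have h1 : q.natDegree = F.natDegree - p := by
            rw [hq, natDegree_divByMonic F hgm, hgdeg]
          omega
        have hqmem : q ∈ Algebra.adjoin K ({g} : Set K[X]) :=
          ih q.natDegree hqdeg q le_rfl hqcomp
        rw [← hFeq, hc]
        exact add_mem (Subalgebra.algebraMap_mem _ c)
          (mul_mem (Algebra.subset_adjoin rfl) hqmem)
  · -- backward direction
    intro hf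
    induction hf using Algebra.adjoin_induction with
    | mem x hx => simp only [Set.mem_singleton_iff] at hx; rw [hx]; exact hgcomp
    | algebraMap r => simp [hs]
    | add x y hx hy ihx ihy => simp [add_comp, ihx, ihy]
    | mul x y hx hy ihx ihy => simp [mul_comp, ihx, ihy]
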